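/- A special finite multiset of n triples does not admit a nice two-coloring. -/
import Mathlib


/-- `f` is a *nice (total) `c`-coloring* of the multiset `T` of tuples: the color
classes `f j` sum to `T`, and for each color `j` and every element `i` appearing in
some tuple of `T` there is a tuple of color `j` not containing `i`. -/
def NiceColoring (c : ℕ) (T : Multiset (Finset ℕ+))
    (f : Fin c → Multiset (Finset ℕ+)) : Prop :=
  (∑ j, f j) = T ∧
  ∀ j : Fin c, ∀ i : ℕ+, (∃ t ∈ T, i ∈ t) → ∃ t ∈ f j, i ∉ t

/-- A multiset `T` of `n` triples is *special*: for some three distinct elements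
`a, b, c` it consists of `n - 3` copies of the triple `{a, b, c}` together with three
further triples, one containing `a`, one containing `b` and one containing `c`, whose
other elements are distinct from `a`, `b`, `c`. -/
def Special (T : Multiset (Finset ℕ+)) : Prop :=
  ∃ a b c : ℕ+, a ≠ b ∧ a ≠ c ∧ b ≠ c ∧
    ∃ t₁ t₂ t₃ : Finset ℕ+,
      T = Multiset.replicate (Multiset.card T - 3) {a, b, c} + {t₁, t₂, t₃} ∧
      a ∈ t₁ ∧ b ∉ t₁ ∧ c ∉ t₁ ∧
      a ∉ t₂ ∧ b ∈ t₂ ∧ c ∉ t₂ ∧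
      a ∉ t₃ ∧ b ∉ t₃ ∧ c ∈ t₃

/-- A special finite multiset of triples does not admit a nice two-coloring. -/
theorem special_no_nice_two_coloring
    (T : Multiset (Finset ℕ+)) (hT : ∀ t ∈ T, t.card = 3)
    (hspec : Special T) :
    ¬ ∃ f : Fin 2 → Multiset (Finset ℕ+), NiceColoring 2 T f := by
  rintro ⟨f, hsum, hnice⟩
  obtain ⟨a, b, c, hab, hac, hbc, t₁, t₂, t₃, hTeq, ha1, hb1, hc1, ha2, hb2, hc2,
    ha3, hb3, hc3⟩ := hspec
  have hf : f 0 + f 1 = T := by rw [← hsum, Fin.sum_univ_two]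
  have h12 : t₁ ≠ t₂ := fun h => ha2 (h ▸ ha1)
  have h13 : t₁ ≠ t₃ := fun h => ha3 (h ▸ ha1)
  have h23 : t₂ ≠ t₃ := fun h => hb3 (h ▸ hb2)
  have habc1 : t₁ ≠ ({a, b, c} : Finset ℕ+) := fun h => hb1 (h ▸ (by simp))
  have habc2 : t₂ ≠ ({a, b, c} : Finset ℕ+) := fun h => ha2 (h ▸ (by simp))
  have habc3 : t₃ ≠ ({a, b, c} : Finset ℕ+) := fun h => ha3 (h ▸ (by simp))
  have hT1 : t₁ ∈ T := by rw [hTeq]; simp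
  have hT2 : t₂ ∈ T := by rw [hTeq]; simp
  have hT3 : t₃ ∈ T := by rw [hTeq]; simp
  have hmemT : ∀ j : Fin 2, ∀ s ∈ f j, s ∈ T := by
    intro j s hs
    rw [← hf, Multiset.mem_add]
    fin_cases j
    · exact Or.inl hs
    · exact Or.inr hs
  have classify : ∀ s ∈ T, s = ({a, b, c} : Finset ℕ+) ∨ s = t₁ ∨ s = t₂ ∨ s = t₃ := by
    intro s hs
    rw [hTeq, Multiset.mem_add] at hs
    rcases hs with hs | hs
    · exact Or.inl (Multiset.eq_of_mem_replicate hs)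
    · simp only [Multiset.insert_eq_cons, Multiset.mem_cons, Multiset.mem_singleton] at hs
      tauto
  have key : ∀ j : Fin 2, (t₁ ∈ f j ∧ t₂ ∈ f j) ∨ (t₁ ∈ f j ∧ t₃ ∈ f j) ∨
      (t₂ ∈ f j ∧ t₃ ∈ f j) := by
    intro j
    obtain ⟨s, hs, hsa⟩ := hnice j a ⟨t₁, hT1, ha1⟩
    obtain ⟨u, hu, hub⟩ := hnice j b ⟨t₂, hT2, hb2⟩
    obtain ⟨v, hv, hvc⟩ := hnice j c ⟨t₃, hT3, hc3⟩
    have hs' : s = t₂ ∨ s = t₃ := by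
      rcases classify s (hmemT j s hs) with h | h | h | h
      · exact absurd (h ▸ (by simp : a ∈ ({a, b, c} : Finset ℕ+))) hsa
      · exact absurd (h ▸ ha1) hsa
      · exact Or.inl h
      · exact Or.inr h
    have hu' : u = t₁ ∨ u = t₃ := by
      rcases classify u (hmemT j u hu) with h | h | h | h
      · exact absurd (h ▸ (by simp : b ∈ ({a, b, c} : Finset ℕ+))) hub
      · exact Or.inl h
      · exact absurd (h ▸ hb2) hub
      · exact Or.inr h
    have hv' : v = t₁ ∨ v = t₂ := by
      rcases classify v (hmemT j v hv) with h | h | h | h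
      · exact absurd (h ▸ (by simp : c ∈ ({a, b, c} : Finset ℕ+))) hvc
      · exact Or.inl h
      · exact Or.inr h
      · exact absurd (h ▸ hc3) hvc
    rcases hs' with rfl | rfl
    · rcases hu' with rfl | rfl
      · exact Or.inl ⟨hu, hs⟩
      · exact Or.inr (Or.inr ⟨hs, hu⟩)
    · rcases hv' with rfl | rfl
      · exact Or.inr (Or.inl ⟨hv, hs⟩)
      · exact Or.inr (Or.inr ⟨hv, hs⟩)
  have hcnt : ∀ t : Finset ℕ+, t ≠ ({a, b, c} : Finset ℕ+) →
      Multiset.count t ({t₁, t₂, t₃} : Multiset (Finset ℕ+)) = 1 →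
      Multiset.count t T = 1 := by
    intro t htne h
    rw [hTeq, Multiset.count_add, Multiset.count_replicate, if_neg (fun h' => htne h'.symm), h]
  have hcnt1 : Multiset.count t₁ T = 1 := by
    apply hcnt t₁ habc1
    simp [Multiset.insert_eq_cons, Multiset.count_cons, Multiset.count_singleton,
      h12, h13]
  have hcnt2 : Multiset.count t₂ T = 1 := by
    apply hcnt t₂ habc2
    simp [Multiset.insert_eq_cons, Multiset.count_cons, Multiset.count_singleton,
      (h12.symm : t₂ ≠ t₁), h23]
  have hcnt3 : Multiset.count t₃ T = 1 := by
    apply hcnt t₃ habc3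
    simp [Multiset.insert_eq_cons, Multiset.count_cons, Multiset.count_singleton,
      (h13.symm : t₃ ≠ t₁), (h23.symm : t₃ ≠ t₂)]
  have noboth : ∀ t : Finset ℕ+, Multiset.count t T = 1 → t ∈ f 0 → t ∈ f 1 → False := by
    intro t hct h0 h1
    rw [← hf, Multiset.count_add] at hct
    have g0 := Multiset.one_le_count_iff_mem.mpr h0
    have g1 := Multiset.one_le_count_iff_mem.mpr h1
    omega
  have k0 := key 0
  have k1 := key 1
  rcases k0 with ⟨p, q⟩ | ⟨p, q⟩ | ⟨p, q⟩ <;>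
    rcases k1 with ⟨r, s⟩ | ⟨r, s⟩ | ⟨r, s⟩ <;>
    first
      | exact noboth t₁ hcnt1 ‹t₁ ∈ f 0› ‹t₁ ∈ f 1›
      | exact noboth t₂ hcnt2 ‹t₂ ∈ f 0› ‹t₂ ∈ f 1›
      | exact noboth t₃ hcnt3 ‹t₃ ∈ f 0› ‹t₃ ∈ f 1›
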